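/- If smooth functions u, v, h : ℝ³ → ℝ satisfy the rotating shallow water equations u_t + u·u_x + v·u_y − f·v + g·h_x = 0, v_t + u·v_x + v·v_y + f·u + g·h_y = 0, h_t + (u·h)_x + (v·h)_y = 0, and h is nowhere zero, then the potential vorticity Ω = (v_x − u_y + f)/h is transported by the flow: Ω_t + u·Ω_x + v·Ω_y = 0. -/

import Mathlib

namespace PVTaux

abbrev E3 := ℝ × ℝ × ℝ

/-- lift a curried function to the product space -/
def lift (u : ℝ → ℝ → ℝ → ℝ) : E3 → ℝ := fun p => u p.1 p.2.1 p.2.2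

lemma lineT_hasDerivAt (x y t : ℝ) :
    HasDerivAt (fun s : ℝ => ((s, x, y) : E3)) (1, 0, 0) t :=
  (hasDerivAt_id t).prodMk ((hasDerivAt_const t x).prodMk (hasDerivAt_const t y))

lemma lineX_hasDerivAt (t y x : ℝ) :
    HasDerivAt (fun s : ℝ => ((t, s, y) : E3)) (0, 1, 0) x :=
  (hasDerivAt_const x t).prodMk ((hasDerivAt_id x).prodMk (hasDerivAt_const x y))

lemma lineY_hasDerivAt (t x y : ℝ) :
    HasDerivAt (fun s : ℝ => ((t, x, s) : E3)) (0, 0, 1) y :=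
  (hasDerivAt_const y t).prodMk ((hasDerivAt_const y x).prodMk (hasDerivAt_id y))

lemma pd_t {F : E3 → ℝ} (hF : Differentiable ℝ F) (t x y : ℝ) :
    HasDerivAt (fun s => F (s, x, y)) (fderiv ℝ F (t, x, y) (1,0,0)) t :=
  (hF (t,x,y)).hasFDerivAt.comp_hasDerivAt t (lineT_hasDerivAt x y t)

lemma pd_x {F : E3 → ℝ} (hF : Differentiable ℝ F) (t x y : ℝ) :
    HasDerivAt (fun s => F (t, s, y)) (fderiv ℝ F (t, x, y) (0,1,0)) x :=
  (hF (t,x,y)).hasFDerivAt.comp_hasDerivAt x (lineX_hasDerivAt t y x)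

lemma pd_y {F : E3 → ℝ} (hF : Differentiable ℝ F) (t x y : ℝ) :
    HasDerivAt (fun s => F (t, x, s)) (fderiv ℝ F (t, x, y) (0,0,1)) y :=
  (hF (t,x,y)).hasFDerivAt.comp_hasDerivAt y (lineY_hasDerivAt t x y)

lemma pd2_t {F : E3 → ℝ} (hF : Differentiable ℝ (fderiv ℝ F)) (t x y : ℝ) (w : E3) :
    HasDerivAt (fun s => fderiv ℝ F (s, x, y) w)
      (fderiv ℝ (fderiv ℝ F) (t, x, y) (1,0,0) w) t := by
  have := HasDerivAt.clm_apply (c := fun s => fderiv ℝ F (s, x, y)) (u := fun _ => w)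
    ((hF (t,x,y)).hasFDerivAt.comp_hasDerivAt t (lineT_hasDerivAt x y t))
    (hasDerivAt_const t w)
  simpa using this

lemma pd2_x {F : E3 → ℝ} (hF : Differentiable ℝ (fderiv ℝ F)) (t x y : ℝ) (w : E3) :
    HasDerivAt (fun s => fderiv ℝ F (t, s, y) w)
      (fderiv ℝ (fderiv ℝ F) (t, x, y) (0,1,0) w) x := by
  have := HasDerivAt.clm_apply (c := fun s => fderiv ℝ F (t, s, y)) (u := fun _ => w)
    ((hF (t,x,y)).hasFDerivAt.comp_hasDerivAt x (lineX_hasDerivAt t y x))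
    (hasDerivAt_const x w)
  simpa using this

lemma pd2_y {F : E3 → ℝ} (hF : Differentiable ℝ (fderiv ℝ F)) (t x y : ℝ) (w : E3) :
    HasDerivAt (fun s => fderiv ℝ F (t, x, s) w)
      (fderiv ℝ (fderiv ℝ F) (t, x, y) (0,0,1) w) y := by
  have := HasDerivAt.clm_apply (c := fun s => fderiv ℝ F (t, x, s)) (u := fun _ => w)
    ((hF (t,x,y)).hasFDerivAt.comp_hasDerivAt y (lineY_hasDerivAt t x y))
    (hasDerivAt_const y w)
  simpa using this

lemma symm2 {F : E3 → ℝ} (hF : ContDiff ℝ 2 F) (p : E3) (a b : E3) :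
    fderiv ℝ (fderiv ℝ F) p a b = fderiv ℝ (fderiv ℝ F) p b a :=
  second_derivative_symmetric
    (fun q => ((hF.differentiable (by norm_num)) q).hasFDerivAt)
    (((hF.fderiv_right (m := 1) (by norm_num)).differentiable (by norm_num) p).hasFDerivAt) a b

end PVTaux

open PVTaux in
/-- Potential vorticity Ω = (v_x − u_y + f)/h is transported by the flow
for solutions of the rotating shallow water equations. -/
theorem potential_vorticity_transport
    (f g : ℝ) (u v h Ω : ℝ → ℝ → ℝ → ℝ)
    (hu : ContDiff ℝ 2 fun p : ℝ × ℝ × ℝ => u p.1 p.2.1 p.2.2)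
    (hv : ContDiff ℝ 2 fun p : ℝ × ℝ × ℝ => v p.1 p.2.1 p.2.2)
    (hh : ContDiff ℝ 2 fun p : ℝ × ℝ × ℝ => h p.1 p.2.1 p.2.2)
    (hne : ∀ t x y, h t x y ≠ 0)
    (e1 : ∀ t x y, deriv (fun s => u s x y) t
        + u t x y * deriv (fun s => u t s y) x
        + v t x y * deriv (fun s => u t x s) y
        - f * v t x y + g * deriv (fun s => h t s y) x = 0)
    (e2 : ∀ t x y, deriv (fun s => v s x y) t
        + u t x y * deriv (fun s => v t s y) x
        + v t x y * deriv (fun s => v t x s) y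
        + f * u t x y + g * deriv (fun s => h t x s) y = 0)
    (e3 : ∀ t x y, deriv (fun s => h s x y) t
        + deriv (fun s => u t s y * h t s y) x
        + deriv (fun s => v t x s * h t x s) y = 0)
    (hΩ : Ω = fun t x y =>
        (deriv (fun s => v t s y) x - deriv (fun s => u t x s) y + f) / h t x y) :
    ∀ t x y, deriv (fun s => Ω s x y) t
        + u t x y * deriv (fun s => Ω t s y) x
        + v t x y * deriv (fun s => Ω t x s) y = 0 := by
  have hU : ContDiff ℝ 2 (lift u) := hu
  have hV : ContDiff ℝ 2 (lift v) := hv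
  have hH : ContDiff ℝ 2 (lift h) := hh
  have hUd : Differentiable ℝ (lift u) := hU.differentiable (by norm_num)
  have hVd : Differentiable ℝ (lift v) := hV.differentiable (by norm_num)
  have hHd : Differentiable ℝ (lift h) := hH.differentiable (by norm_num)
  have hUd' : Differentiable ℝ (fderiv ℝ (lift u)) :=
    (hU.fderiv_right (m := 1) (by norm_num)).differentiable (by norm_num)
  have hVd' : Differentiable ℝ (fderiv ℝ (lift v)) :=
    (hV.fderiv_right (m := 1) (by norm_num)).differentiable (by norm_num)
  have hHd' : Differentiable ℝ (fderiv ℝ (lift h)) :=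
    (hH.fderiv_right (m := 1) (by norm_num)).differentiable (by norm_num)
  -- equations in fderiv form
  have e1' : ∀ t x y : ℝ, fderiv ℝ (lift u) (t,x,y) (1,0,0)
      + u t x y * fderiv ℝ (lift u) (t,x,y) (0,1,0)
      + v t x y * fderiv ℝ (lift u) (t,x,y) (0,0,1)
      - f * v t x y + g * fderiv ℝ (lift h) (t,x,y) (0,1,0) = 0 := by
    intro t x y
    have a1 : deriv (fun s => u s x y) t = fderiv ℝ (lift u) (t,x,y) (1,0,0) :=
      (pd_t hUd t x y).deriv
    have a2 : deriv (fun s => u t s y) x = fderiv ℝ (lift u) (t,x,y) (0,1,0) :=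
      (pd_x hUd t x y).deriv
    have a3 : deriv (fun s => u t x s) y = fderiv ℝ (lift u) (t,x,y) (0,0,1) :=
      (pd_y hUd t x y).deriv
    have a4 : deriv (fun s => h t s y) x = fderiv ℝ (lift h) (t,x,y) (0,1,0) :=
      (pd_x hHd t x y).deriv
    have A := e1 t x y
    rw [a1, a2, a3, a4] at A
    exact A
  have e2' : ∀ t x y : ℝ, fderiv ℝ (lift v) (t,x,y) (1,0,0)
      + u t x y * fderiv ℝ (lift v) (t,x,y) (0,1,0)
      + v t x y * fderiv ℝ (lift v) (t,x,y) (0,0,1)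
      + f * u t x y + g * fderiv ℝ (lift h) (t,x,y) (0,0,1) = 0 := by
    intro t x y
    have a1 : deriv (fun s => v s x y) t = fderiv ℝ (lift v) (t,x,y) (1,0,0) :=
      (pd_t hVd t x y).deriv
    have a2 : deriv (fun s => v t s y) x = fderiv ℝ (lift v) (t,x,y) (0,1,0) :=
      (pd_x hVd t x y).deriv
    have a3 : deriv (fun s => v t x s) y = fderiv ℝ (lift v) (t,x,y) (0,0,1) :=
      (pd_y hVd t x y).deriv
    have a4 : deriv (fun s => h t x s) y = fderiv ℝ (lift h) (t,x,y) (0,0,1) :=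
      (pd_y hHd t x y).deriv
    have A := e2 t x y
    rw [a1, a2, a3, a4] at A
    exact A
  have e3' : ∀ t x y : ℝ, fderiv ℝ (lift h) (t,x,y) (1,0,0)
      + (fderiv ℝ (lift u) (t,x,y) (0,1,0) * h t x y
          + u t x y * fderiv ℝ (lift h) (t,x,y) (0,1,0))
      + (fderiv ℝ (lift v) (t,x,y) (0,0,1) * h t x y
          + v t x y * fderiv ℝ (lift h) (t,x,y) (0,0,1)) = 0 := by
    intro t x y
    have a1 : deriv (fun s => h s x y) t = fderiv ℝ (lift h) (t,x,y) (1,0,0) :=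
      (pd_t hHd t x y).deriv
    have a2 : deriv (fun s => u t s y * h t s y) x
        = fderiv ℝ (lift u) (t,x,y) (0,1,0) * h t x y
          + u t x y * fderiv ℝ (lift h) (t,x,y) (0,1,0) :=
      ((pd_x hUd t x y).mul (pd_x hHd t x y)).deriv
    have a3 : deriv (fun s => v t x s * h t x s) y
        = fderiv ℝ (lift v) (t,x,y) (0,0,1) * h t x y
          + v t x y * fderiv ℝ (lift h) (t,x,y) (0,0,1) :=
      ((pd_y hVd t x y).mul (pd_y hHd t x y)).deriv
    have A := e3 t x y
    rw [a1, a2, a3] at A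
    exact A
  simp only [hΩ]
  intro t x y
  -- symmetry of second derivatives
  have sU : ∀ a b : E3, fderiv ℝ (fderiv ℝ (lift u)) (t,x,y) a b
      = fderiv ℝ (fderiv ℝ (lift u)) (t,x,y) b a := symm2 hU (t,x,y)
  have sV : ∀ a b : E3, fderiv ℝ (fderiv ℝ (lift v)) (t,x,y) a b
      = fderiv ℝ (fderiv ℝ (lift v)) (t,x,y) b a := symm2 hV (t,x,y)
  have sH : ∀ a b : E3, fderiv ℝ (fderiv ℝ (lift h)) (t,x,y) a b
      = fderiv ℝ (fderiv ℝ (lift h)) (t,x,y) b a := symm2 hH (t,x,y)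
  -- differentiate e1 in y
  have hD1 : fderiv ℝ (fderiv ℝ (lift u)) (t,x,y) (0,0,1) (1,0,0)
      + (fderiv ℝ (lift u) (t,x,y) (0,0,1) * fderiv ℝ (lift u) (t,x,y) (0,1,0)
          + u t x y * fderiv ℝ (fderiv ℝ (lift u)) (t,x,y) (0,0,1) (0,1,0))
      + (fderiv ℝ (lift v) (t,x,y) (0,0,1) * fderiv ℝ (lift u) (t,x,y) (0,0,1)
          + v t x y * fderiv ℝ (fderiv ℝ (lift u)) (t,x,y) (0,0,1) (0,0,1))
      - f * fderiv ℝ (lift v) (t,x,y) (0,0,1)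
      + g * fderiv ℝ (fderiv ℝ (lift h)) (t,x,y) (0,0,1) (0,1,0) = 0 := by
    have hφ : HasDerivAt (fun s : ℝ => fderiv ℝ (lift u) (t,x,s) (1,0,0)
        + u t x s * fderiv ℝ (lift u) (t,x,s) (0,1,0)
        + v t x s * fderiv ℝ (lift u) (t,x,s) (0,0,1)
        - f * v t x s + g * fderiv ℝ (lift h) (t,x,s) (0,1,0))
        (fderiv ℝ (fderiv ℝ (lift u)) (t,x,y) (0,0,1) (1,0,0)
          + (fderiv ℝ (lift u) (t,x,y) (0,0,1) * fderiv ℝ (lift u) (t,x,y) (0,1,0)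
              + u t x y * fderiv ℝ (fderiv ℝ (lift u)) (t,x,y) (0,0,1) (0,1,0))
          + (fderiv ℝ (lift v) (t,x,y) (0,0,1) * fderiv ℝ (lift u) (t,x,y) (0,0,1)
              + v t x y * fderiv ℝ (fderiv ℝ (lift u)) (t,x,y) (0,0,1) (0,0,1))
          - f * fderiv ℝ (lift v) (t,x,y) (0,0,1)
          + g * fderiv ℝ (fderiv ℝ (lift h)) (t,x,y) (0,0,1) (0,1,0)) y :=
      ((((pd2_y hUd' t x y (1,0,0)).add
          ((pd_y hUd t x y).mul (pd2_y hUd' t x y (0,1,0)))).add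
          ((pd_y hVd t x y).mul (pd2_y hUd' t x y (0,0,1)))).sub
          (HasDerivAt.const_mul f (pd_y hVd t x y))).add
          (HasDerivAt.const_mul g (pd2_y hHd' t x y (0,1,0)))
    have h0 : HasDerivAt (fun s : ℝ => fderiv ℝ (lift u) (t,x,s) (1,0,0)
        + u t x s * fderiv ℝ (lift u) (t,x,s) (0,1,0)
        + v t x s * fderiv ℝ (lift u) (t,x,s) (0,0,1)
        - f * v t x s + g * fderiv ℝ (lift h) (t,x,s) (0,1,0)) 0 y := by
      have heq : (fun s : ℝ => fderiv ℝ (lift u) (t,x,s) (1,0,0)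
          + u t x s * fderiv ℝ (lift u) (t,x,s) (0,1,0)
          + v t x s * fderiv ℝ (lift u) (t,x,s) (0,0,1)
          - f * v t x s + g * fderiv ℝ (lift h) (t,x,s) (0,1,0))
          = fun _ => (0:ℝ) := funext fun s => e1' t x s
      rw [heq]; exact hasDerivAt_const y 0
    exact hφ.unique h0
  -- differentiate e2 in x
  have hD2 : fderiv ℝ (fderiv ℝ (lift v)) (t,x,y) (0,1,0) (1,0,0)
      + (fderiv ℝ (lift u) (t,x,y) (0,1,0) * fderiv ℝ (lift v) (t,x,y) (0,1,0)
          + u t x y * fderiv ℝ (fderiv ℝ (lift v)) (t,x,y) (0,1,0) (0,1,0))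
      + (fderiv ℝ (lift v) (t,x,y) (0,1,0) * fderiv ℝ (lift v) (t,x,y) (0,0,1)
          + v t x y * fderiv ℝ (fderiv ℝ (lift v)) (t,x,y) (0,1,0) (0,0,1))
      + f * fderiv ℝ (lift u) (t,x,y) (0,1,0)
      + g * fderiv ℝ (fderiv ℝ (lift h)) (t,x,y) (0,1,0) (0,0,1) = 0 := by
    have hφ : HasDerivAt (fun s : ℝ => fderiv ℝ (lift v) (t,s,y) (1,0,0)
        + u t s y * fderiv ℝ (lift v) (t,s,y) (0,1,0)
        + v t s y * fderiv ℝ (lift v) (t,s,y) (0,0,1)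
        + f * u t s y + g * fderiv ℝ (lift h) (t,s,y) (0,0,1))
        (fderiv ℝ (fderiv ℝ (lift v)) (t,x,y) (0,1,0) (1,0,0)
          + (fderiv ℝ (lift u) (t,x,y) (0,1,0) * fderiv ℝ (lift v) (t,x,y) (0,1,0)
              + u t x y * fderiv ℝ (fderiv ℝ (lift v)) (t,x,y) (0,1,0) (0,1,0))
          + (fderiv ℝ (lift v) (t,x,y) (0,1,0) * fderiv ℝ (lift v) (t,x,y) (0,0,1)
              + v t x y * fderiv ℝ (fderiv ℝ (lift v)) (t,x,y) (0,1,0) (0,0,1))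
          + f * fderiv ℝ (lift u) (t,x,y) (0,1,0)
          + g * fderiv ℝ (fderiv ℝ (lift h)) (t,x,y) (0,1,0) (0,0,1)) x :=
      ((((pd2_x hVd' t x y (1,0,0)).add
          ((pd_x hUd t x y).mul (pd2_x hVd' t x y (0,1,0)))).add
          ((pd_x hVd t x y).mul (pd2_x hVd' t x y (0,0,1)))).add
          (HasDerivAt.const_mul f (pd_x hUd t x y))).add
          (HasDerivAt.const_mul g (pd2_x hHd' t x y (0,0,1)))
    have h0 : HasDerivAt (fun s : ℝ => fderiv ℝ (lift v) (t,s,y) (1,0,0)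
        + u t s y * fderiv ℝ (lift v) (t,s,y) (0,1,0)
        + v t s y * fderiv ℝ (lift v) (t,s,y) (0,0,1)
        + f * u t s y + g * fderiv ℝ (lift h) (t,s,y) (0,0,1)) 0 x := by
      have heq : (fun s : ℝ => fderiv ℝ (lift v) (t,s,y) (1,0,0)
          + u t s y * fderiv ℝ (lift v) (t,s,y) (0,1,0)
          + v t s y * fderiv ℝ (lift v) (t,s,y) (0,0,1)
          + f * u t s y + g * fderiv ℝ (lift h) (t,s,y) (0,0,1))
          = fun _ => (0:ℝ) := funext fun s => e2' t s y
      rw [heq]; exact hasDerivAt_const x 0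
    exact hφ.unique h0
  -- compute the three derivatives of Ω along the slices
  have Gt : deriv (fun s =>
      (deriv (fun s' => v s s' y) x - deriv (fun s' => u s x s') y + f) / h s x y) t
      = ((fderiv ℝ (fderiv ℝ (lift v)) (t,x,y) (1,0,0) (0,1,0)
          - fderiv ℝ (fderiv ℝ (lift u)) (t,x,y) (1,0,0) (0,0,1))
          * h t x y
        - (fderiv ℝ (lift v) (t,x,y) (0,1,0) - fderiv ℝ (lift u) (t,x,y) (0,0,1) + f)
          * fderiv ℝ (lift h) (t,x,y) (1,0,0)) / h t x y ^ 2 := by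
    have gt : (fun s => (deriv (fun s' => v s s' y) x
          - deriv (fun s' => u s x s') y + f) / h s x y)
        = (fun s => (fderiv ℝ (lift v) (s,x,y) (0,1,0)
          - fderiv ℝ (lift u) (s,x,y) (0,0,1) + f) / h s x y) := by
      funext s
      have b1 : deriv (fun s' => v s s' y) x = fderiv ℝ (lift v) (s,x,y) (0,1,0) :=
        (pd_x hVd s x y).deriv
      have b2 : deriv (fun s' => u s x s') y = fderiv ℝ (lift u) (s,x,y) (0,0,1) :=
        (pd_y hUd s x y).deriv
      rw [b1, b2]
    rw [gt]
    exact ((((pd2_t hVd' t x y (0,1,0)).sub (pd2_t hUd' t x y (0,0,1))).add_const f).div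
      (pd_t hHd t x y) (hne t x y)).deriv
  have Gx : deriv (fun s =>
      (deriv (fun s' => v t s' y) s - deriv (fun s' => u t s s') y + f) / h t s y) x
      = ((fderiv ℝ (fderiv ℝ (lift v)) (t,x,y) (0,1,0) (0,1,0)
          - fderiv ℝ (fderiv ℝ (lift u)) (t,x,y) (0,1,0) (0,0,1))
          * h t x y
        - (fderiv ℝ (lift v) (t,x,y) (0,1,0) - fderiv ℝ (lift u) (t,x,y) (0,0,1) + f)
          * fderiv ℝ (lift h) (t,x,y) (0,1,0)) / h t x y ^ 2 := by
    have gt : (fun s => (deriv (fun s' => v t s' y) s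
          - deriv (fun s' => u t s s') y + f) / h t s y)
        = (fun s => (fderiv ℝ (lift v) (t,s,y) (0,1,0)
          - fderiv ℝ (lift u) (t,s,y) (0,0,1) + f) / h t s y) := by
      funext s
      have b1 : deriv (fun s' => v t s' y) s = fderiv ℝ (lift v) (t,s,y) (0,1,0) :=
        (pd_x hVd t s y).deriv
      have b2 : deriv (fun s' => u t s s') y = fderiv ℝ (lift u) (t,s,y) (0,0,1) :=
        (pd_y hUd t s y).deriv
      rw [b1, b2]
    rw [gt]
    exact ((((pd2_x hVd' t x y (0,1,0)).sub (pd2_x hUd' t x y (0,0,1))).add_const f).div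
      (pd_x hHd t x y) (hne t x y)).deriv
  have Gy : deriv (fun s =>
      (deriv (fun s' => v t s' s) x - deriv (fun s' => u t x s') s + f) / h t x s) y
      = ((fderiv ℝ (fderiv ℝ (lift v)) (t,x,y) (0,0,1) (0,1,0)
          - fderiv ℝ (fderiv ℝ (lift u)) (t,x,y) (0,0,1) (0,0,1))
          * h t x y
        - (fderiv ℝ (lift v) (t,x,y) (0,1,0) - fderiv ℝ (lift u) (t,x,y) (0,0,1) + f)
          * fderiv ℝ (lift h) (t,x,y) (0,0,1)) / h t x y ^ 2 := by
    have gt : (fun s => (deriv (fun s' => v t s' s) x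
          - deriv (fun s' => u t x s') s + f) / h t x s)
        = (fun s => (fderiv ℝ (lift v) (t,x,s) (0,1,0)
          - fderiv ℝ (lift u) (t,x,s) (0,0,1) + f) / h t x s) := by
      funext s
      have b1 : deriv (fun s' => v t s' s) x = fderiv ℝ (lift v) (t,x,s) (0,1,0) :=
        (pd_x hVd t x s).deriv
      have b2 : deriv (fun s' => u t x s') s = fderiv ℝ (lift u) (t,x,s) (0,0,1) :=
        (pd_y hUd t x s).deriv
      rw [b1, b2]
    rw [gt]
    exact ((((pd2_y hVd' t x y (0,1,0)).sub (pd2_y hUd' t x y (0,0,1))).add_const f).div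
      (pd_y hHd t x y) (hne t x y)).deriv
  rw [Gt, Gx, Gy]
  -- canonicalize mixed second derivatives
  rw [sU ((0:ℝ),(0:ℝ),(1:ℝ)) ((1:ℝ),(0:ℝ),(0:ℝ)), sU ((0:ℝ),(0:ℝ),(1:ℝ)) ((0:ℝ),(1:ℝ),(0:ℝ)),
    sH ((0:ℝ),(0:ℝ),(1:ℝ)) ((0:ℝ),(1:ℝ),(0:ℝ))] at hD1
  rw [sV ((0:ℝ),(1:ℝ),(0:ℝ)) ((1:ℝ),(0:ℝ),(0:ℝ))] at hD2
  rw [sV ((0:ℝ),(0:ℝ),(1:ℝ)) ((0:ℝ),(1:ℝ),(0:ℝ))]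
  have E3 := e3' t x y
  have hne' := hne t x y
  field_simp
  linear_combination (h t x y) * hD2 - (h t x y) * hD1
    - (fderiv ℝ (lift v) (t,x,y) (0,1,0) - fderiv ℝ (lift u) (t,x,y) (0,0,1) + f) * E3
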